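/- For every function δ₀ : ℝ → ℝ mapping (0,2] into (0,1] there exists a constant r₁ with 0 ≤ r₁ < 1 such that: for every real Banach space E for which δ₀ is a modulus of uniform convexity, every triple U, V, W of invertible linear isometries of E satisfying the Heisenberg relations, every n ∈ ℕ with n ≥ 2, all a₀, b₀ ∈ ℕ (including 0), and every ξ ∈ E, one has ‖ X_{a₀} ∘ (∏_{b=0}^{n−1} Y_{b₀+b}) ∘ (I − Z_{a₀+b₀}) ξ ‖ ≤ max{ r₁·‖(I − Z_{a₀+b₀})ξ‖, (1/2)^{n−2}·‖ξ‖ } (the operators Y_{b₀+b} commute with one another, so the product is well-defined). -/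

import Mathlib

/-- `δ : ℝ → ℝ` is a *modulus of uniform convexity* for `E`: it maps `(0,2]` into `(0,1]` and
for every `ε ∈ (0,2]` and all unit vectors `ξ, η` with `‖ξ - η‖ ≥ ε` one has
`‖(ξ + η)/2‖ ≤ 1 - δ ε`. -/
def IsUCModulus (E : Type*) [NormedAddCommGroup E] [NormedSpace ℝ E] (δ : ℝ → ℝ) : Prop :=
  (∀ ε : ℝ, 0 < ε → ε ≤ 2 → 0 < δ ε ∧ δ ε ≤ 1) ∧
    ∀ ε : ℝ, 0 < ε → ε ≤ 2 → ∀ ξ η : E, ‖ξ‖ = 1 → ‖η‖ = 1 → ε ≤ ‖ξ - η‖ →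
      ‖(2⁻¹ : ℝ) • (ξ + η)‖ ≤ 1 - δ ε

/-- `U, V, W` satisfy the Heisenberg relations `W = U⁻¹V⁻¹UV`, `UW = WU`, `VW = WV`
(the multiplication on `E ≃ₗᵢ[ℝ] E` is composition, `(e₁ * e₂) x = e₁ (e₂ x)`). -/
def HeisenbergRel {E : Type*} [NormedAddCommGroup E] [NormedSpace ℝ E]
    (U V W : E ≃ₗᵢ[ℝ] E) : Prop :=
  W = U⁻¹ * V⁻¹ * U * V ∧ U * W = W * U ∧ V * W = W * V

/-- The bounded operator on `E` underlying an invertible linear isometry. -/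
noncomputable def isomCLM {E : Type*} [NormedAddCommGroup E] [NormedSpace ℝ E]
    (U : E ≃ₗᵢ[ℝ] E) : E →L[ℝ] E :=
  U.toLinearIsometry.toContinuousLinearMap

/-- The operator `X_k = (I + U^{2^k})/2`. -/
noncomputable def halfOp {E : Type*} [NormedAddCommGroup E] [NormedSpace ℝ E]
    (U : E ≃ₗᵢ[ℝ] E) (k : ℕ) : E →L[ℝ] E :=
  (2⁻¹ : ℝ) • (1 + isomCLM (U ^ 2 ^ k))

section helpers

lemma sum_range_add' {M : Type*} [AddCommMonoid M] (g : ℕ → M) (a b : ℕ) :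
    ∑ i ∈ Finset.range (a + b), g i
      = ∑ i ∈ Finset.range a, g i + ∑ i ∈ Finset.range b, g (a + i) := by
  induction b with
  | zero => simp
  | succ b ih =>
      rw [Nat.add_succ, Finset.sum_range_succ, Finset.sum_range_succ, ih, add_assoc]

lemma sum_range_mul' {M : Type*} [AddCommMonoid M] (g : ℕ → M) (a b : ℕ) :
    ∑ i ∈ Finset.range (a * b), g i
      = ∑ s ∈ Finset.range a, ∑ r ∈ Finset.range b, g (s * b + r) := by
  induction a with
  | zero => simp
  | succ a ih =>
      rw [Nat.succ_mul, sum_range_add' g (a*b) b, ih, Finset.sum_range_succ]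

lemma heis_pow_pow {G : Type*} [Group G] (U V W : G) (hW : W = U⁻¹ * V⁻¹ * U * V)
    (hUW : U * W = W * U) (hVW : V * W = W * V) (p q : ℕ) :
    U ^ p * V ^ q = V ^ q * U ^ p * W ^ (p * q) := by
  have hUV : U * V = V * U * W := by rw [hW]; group
  have cUW : Commute U W := hUW
  have cVW : Commute V W := hVW
  have h1 : ∀ m : ℕ, U * V ^ m = V ^ m * U * W ^ m := by
    intro m
    induction m with
    | zero => simp
    | succ m ih =>
        calc U * V ^ (m+1) = (U * V ^ m) * V := by rw [pow_succ, mul_assoc]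
        _ = V ^ m * U * W ^ m * V := by rw [ih]
        _ = V ^ m * U * (V * W ^ m) := by
              rw [mul_assoc, mul_assoc, (cVW.pow_right m).symm.eq]; group
        _ = V ^ m * (U * V) * W ^ m := by group
        _ = V ^ m * (V * U * W) * W ^ m := by rw [hUV]
        _ = V ^ (m+1) * U * W ^ (m+1) := by
              rw [pow_succ, pow_succ]
              group
  induction p with
  | zero => simp
  | succ p ih =>
      calc U ^ (p+1) * V ^ q = U * (U ^ p * V ^ q) := by
            rw [pow_succ', mul_assoc]
      _ = U * (V ^ q * U ^ p * W ^ (p*q)) := by rw [ih]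
      _ = (U * V ^ q) * (U ^ p * W ^ (p*q)) := by
            rw [mul_assoc, mul_assoc]
      _ = (V ^ q * U * W ^ q) * (U ^ p * W ^ (p*q)) := by rw [h1 q]
      _ = V ^ q * U * (W ^ q * U ^ p) * W ^ (p*q) := by group
      _ = V ^ q * U * (U ^ p * W ^ q) * W ^ (p*q) := by
            rw [((cUW.symm).pow_pow q p).eq]
      _ = V ^ q * U ^ (p+1) * W ^ ((p+1)*q) := by
            have e1 : (p+1)*q = q + p*q := by ring
            rw [e1, pow_succ', pow_add]
            group

end helpers

set_option maxHeartbeats 1600000 in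
theorem heisenberg_shifted_inequality.{u}
    (δ₀ : ℝ → ℝ) (hδ₀ : ∀ ε : ℝ, 0 < ε → ε ≤ 2 → 0 < δ₀ ε ∧ δ₀ ε ≤ 1) :
    ∃ r₁ : ℝ, 0 ≤ r₁ ∧ r₁ < 1 ∧
      ∀ (E : Type u) [NormedAddCommGroup E] [NormedSpace ℝ E] [CompleteSpace E],
        IsUCModulus E δ₀ →
          ∀ U V W : E ≃ₗᵢ[ℝ] E, HeisenbergRel U V W →
            ∀ n : ℕ, 2 ≤ n → ∀ a₀ b₀ : ℕ, ∀ ξ : E,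
              ‖(halfOp U a₀ * ((List.range n).map fun b => halfOp V (b₀ + b)).prod *
                  (1 - halfOp W (a₀ + b₀))) ξ‖ ≤
                max (r₁ * ‖(1 - halfOp W (a₀ + b₀)) ξ‖) ((2⁻¹ : ℝ) ^ (n - 2) * ‖ξ‖) := by
  obtain ⟨hδpos, hδle⟩ := hδ₀ (1/16) (by norm_num) (by norm_num)
  refine ⟨1 - min (δ₀ (1/16)) 2⁻¹, ?_, ?_, ?_⟩
  · have h := min_le_right (δ₀ (1/16)) (2⁻¹ : ℝ)
    linarith
  · have h := lt_min hδpos (by norm_num : (0:ℝ) < 2⁻¹)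
    linarith
  intro E _ _ _ hUC U V W hH n hn a₀ b₀ ξ
  -- the three basic isometries at the relevant scales
  set u : E ≃ₗᵢ[ℝ] E := U ^ (2^a₀) with hu_def
  set v : E ≃ₗᵢ[ℝ] E := V ^ (2^b₀) with hv_def
  set w : E ≃ₗᵢ[ℝ] E := W ^ (2^(a₀+b₀)) with hw_def
  have key : ∀ m : ℕ, u * v ^ m = v ^ m * u * w ^ m := by
    intro m
    have e1 : v ^ m = V ^ (2^b₀ * m) := by rw [hv_def, ← pow_mul]
    have e2 : w ^ m = W ^ (2^a₀ * (2^b₀ * m)) := by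
      rw [hw_def, ← pow_mul, ← mul_assoc, ← pow_add]
    rw [e1, e2]
    exact heis_pow_pow U V W hH.1 hH.2.1 hH.2.2 (2^a₀) (2^b₀ * m)
  have cwv : Commute w v := by
    have : Commute W V := (show Commute V W from hH.2.2).symm
    exact this.pow_pow _ _
  set ζ : E := (1 - halfOp W (a₀ + b₀)) ξ with hζ_def
  have hζapp : ζ = (2⁻¹ : ℝ) • (ξ - w ξ) := by
    rw [hζ_def]
    simp only [halfOp, isomCLM, ContinuousLinearMap.sub_apply, ContinuousLinearMap.one_apply,
      ContinuousLinearMap.smul_apply, ContinuousLinearMap.add_apply,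
      LinearIsometry.coe_toContinuousLinearMap, LinearIsometryEquiv.coe_toLinearIsometry]
    rw [← hw_def]
    module
  -- the product of the Y operators acts as an average of powers of v
  have hPsum : ∀ (N : ℕ) (x : E),
      (((List.range N).map fun b => halfOp V (b₀ + b)).prod) x
        = ((2^N : ℝ))⁻¹ • ∑ i ∈ Finset.range (2^N), (v ^ i) x := by
    intro N
    induction N with
    | zero => intro x; simp
    | succ N ih =>
        intro x
        rw [List.range_succ, List.map_append, List.prod_append, List.map_singleton,
          List.prod_singleton, ContinuousLinearMap.mul_apply]
        have hv2N : ∀ y : E, (halfOp V (b₀ + N)) y = (2⁻¹:ℝ) • (y + (v ^ (2^N)) y) := by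
          intro y
          have e : v ^ (2^N) = V ^ (2^(b₀+N)) := by rw [hv_def, ← pow_mul, ← pow_add]
          rw [e]
          simp only [halfOp, isomCLM, ContinuousLinearMap.smul_apply,
            ContinuousLinearMap.add_apply, ContinuousLinearMap.one_apply,
            LinearIsometry.coe_toContinuousLinearMap, LinearIsometryEquiv.coe_toLinearIsometry]
        rw [hv2N, ih]
        have hterm : ∀ i, (v^i) ((2⁻¹:ℝ) • (x + (v^(2^N)) x))
            = (2⁻¹:ℝ) • ((v^i) x + (v^(2^N + i)) x) := by
          intro i
          rw [map_smul, map_add]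
          congr 2
          show (v^i * v^(2^N)) x = _
          rw [← pow_add, Nat.add_comm]
        rw [Finset.sum_congr rfl (fun i _ => hterm i), ← Finset.smul_sum, smul_smul]
        have h2 : 2^(N+1) = 2^N + 2^N := by rw [pow_succ]; omega
        rw [h2, sum_range_add' (fun i => (v^i) x) (2^N) (2^N), Finset.sum_add_distrib]
        congr 1
        rw [pow_succ, mul_inv]
  set P := ((List.range n).map fun b => halfOp V (b₀ + b)).prod with hP_def
  set Sv : ℕ → E := fun m => ∑ i ∈ Finset.range m, (v ^ i) ζ with hSv_def
  set ζn : E := ((2^n : ℝ))⁻¹ • Sv (2^n) with hζn_def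
  have hζnP : P ζ = ζn := hPsum n ζ
  have hLHS : (halfOp U a₀ * P * (1 - halfOp W (a₀ + b₀))) ξ = (2⁻¹:ℝ) • (ζn + u ζn) := by
    rw [ContinuousLinearMap.mul_apply, ContinuousLinearMap.mul_apply, ← hζ_def, hζnP]
    simp only [halfOp, isomCLM, ContinuousLinearMap.smul_apply, ContinuousLinearMap.add_apply,
      ContinuousLinearMap.one_apply, LinearIsometry.coe_toContinuousLinearMap,
      LinearIsometryEquiv.coe_toLinearIsometry]
    rfl
  -- basic norm facts
  have hSnorm : ∀ m : ℕ, ‖Sv m‖ ≤ (m:ℝ) * ‖ζ‖ := by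
    intro m
    calc ‖Sv m‖ ≤ ∑ i ∈ Finset.range m, ‖(v ^ i) ζ‖ := norm_sum_le _ _
    _ = ∑ i ∈ Finset.range m, ‖ζ‖ := by simp [LinearIsometryEquiv.norm_map]
    _ = (m:ℝ) * ‖ζ‖ := by simp [Finset.sum_const]
  have h2npos : (0:ℝ) < (2:ℝ)^n := by positivity
  have hns : ∀ (c : ℝ), 0 ≤ c → ∀ x : E, ‖c • x‖ = c * ‖x‖ := by
    intro c hc x
    rw [norm_smul, Real.norm_eq_abs, abs_of_nonneg hc]
  have hζn_le : ‖ζn‖ ≤ ‖ζ‖ := by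
    rw [hζn_def, hns _ (by positivity)]
    calc ((2:ℝ)^n)⁻¹ * ‖Sv (2^n)‖ ≤ ((2:ℝ)^n)⁻¹ * (((2^n : ℕ):ℝ) * ‖ζ‖) := by
          apply mul_le_mul_of_nonneg_left (hSnorm _) (by positivity)
    _ = ‖ζ‖ := by push_cast; field_simp
  have hη_le : ‖(2⁻¹:ℝ) • (ζn + u ζn)‖ ≤ ‖ζn‖ := by
    rw [hns _ (by norm_num)]
    have h := norm_add_le ζn (u ζn)
    rw [LinearIsometryEquiv.norm_map] at h
    linarith
  -- case split on the easy branch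
  by_cases hcase : ‖(halfOp U a₀ * P * (1 - halfOp W (a₀ + b₀))) ξ‖
      ≤ (1 - min (δ₀ (1/16)) 2⁻¹) * ‖ζ‖
  · exact hcase.trans (le_max_left _ _)
  push_neg at hcase
  rw [hLHS] at hcase
  have hhalf_le : (2⁻¹:ℝ) ≤ 1 - min (δ₀ (1/16)) 2⁻¹ := by
    have := min_le_right (δ₀ (1/16)) (2⁻¹:ℝ); linarith
  have hδmin : (1:ℝ) - δ₀ (1/16) ≤ 1 - min (δ₀ (1/16)) 2⁻¹ := by
    have := min_le_left (δ₀ (1/16)) (2⁻¹:ℝ); linarith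
  have hminpos : (0:ℝ) ≤ 1 - min (δ₀ (1/16)) 2⁻¹ := by linarith
  have hζnorm_pos : 0 < ‖ζn‖ :=
    lt_of_lt_of_le (lt_of_le_of_lt (by positivity) hcase) hη_le
  have hζpos : 0 < ‖ζ‖ := lt_of_lt_of_le hζnorm_pos hζn_le
  have hζ2 : ‖ζ‖ ≤ 2 * ‖ζn‖ := by
    have h1 : (2⁻¹:ℝ) * ‖ζ‖ ≤ (1 - min (δ₀ (1/16)) 2⁻¹) * ‖ζ‖ :=
      mul_le_mul_of_nonneg_right hhalf_le hζpos.le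
    have h2 : ‖(2⁻¹:ℝ) • (ζn + u ζn)‖ ≤ ‖ζn‖ := hη_le
    linarith
  -- uniform convexity: an almost-norm-preserving midpoint forces closeness
  have uc2 : ∀ (g' : E ≃ₗᵢ[ℝ] E) (x : E), x ≠ 0 →
      (1 - δ₀ (1/16)) * ‖x‖ < ‖(2⁻¹:ℝ) • (x + g' x)‖ → ‖x - g' x‖ ≤ (1/16) * ‖x‖ := by
    intro g' x hx h
    by_contra hc
    push_neg at hc
    have hxpos : 0 < ‖x‖ := norm_pos_iff.mpr hx
    have h1 : ‖(‖x‖⁻¹ : ℝ) • x‖ = 1 := by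
      rw [hns _ (by positivity), inv_mul_cancel₀ hxpos.ne']
    have h2 : ‖(‖x‖⁻¹ : ℝ) • (g' x)‖ = 1 := by
      rw [hns _ (by positivity), LinearIsometryEquiv.norm_map, inv_mul_cancel₀ hxpos.ne']
    have h3 : (1/16 : ℝ) ≤ ‖(‖x‖⁻¹:ℝ) • x - (‖x‖⁻¹:ℝ) • (g' x)‖ := by
      rw [← smul_sub, hns _ (by positivity)]
      calc (1/16:ℝ) = ‖x‖⁻¹ * ((1/16) * ‖x‖) := by field_simp
      _ ≤ ‖x‖⁻¹ * ‖x - g' x‖ := mul_le_mul_of_nonneg_left hc.le (by positivity)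
    have h4 := hUC.2 (1/16) (by norm_num) (by norm_num) _ _ h1 h2 h3
    have e : (2⁻¹:ℝ) • ((‖x‖⁻¹:ℝ) • x + (‖x‖⁻¹:ℝ) • g' x)
        = (‖x‖⁻¹:ℝ) • ((2⁻¹:ℝ) • (x + g' x)) := by
      rw [← smul_add, smul_comm]
    rw [e, hns _ (by positivity)] at h4
    have h5 : ‖(2⁻¹:ℝ) • (x + g' x)‖ ≤ (1 - δ₀ (1/16)) * ‖x‖ := by
      calc ‖(2⁻¹:ℝ) • (x + g' x)‖ = ‖x‖ * (‖x‖⁻¹ * ‖(2⁻¹:ℝ) • (x + g' x)‖) := by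
            field_simp
      _ ≤ ‖x‖ * (1 - δ₀ (1/16)) := mul_le_mul_of_nonneg_left h4 (by positivity)
      _ = (1 - δ₀ (1/16)) * ‖x‖ := by ring
    linarith
  set g : E ≃ₗᵢ[ℝ] E := v ^ (2^(n-1)) with hg_def
  -- the dyadic blocks are almost fixed by g
  have hgfix : ∀ j, j < n → ‖Sv (2^j) - g (Sv (2^j))‖ ≤ (1/16) * (2^j:ℝ) * ‖ζ‖ := by
    intro j hj
    set τ : E := ((2^j:ℝ))⁻¹ • Sv (2^j) with hτ_def
    have hτn : ‖τ‖ ≤ ‖ζ‖ := by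
      rw [hτ_def, hns _ (by positivity)]
      calc ((2:ℝ)^j)⁻¹ * ‖Sv (2^j)‖ ≤ ((2:ℝ)^j)⁻¹ * (((2^j : ℕ):ℝ) * ‖ζ‖) :=
            mul_le_mul_of_nonneg_left (hSnorm _) (by positivity)
      _ = ‖ζ‖ := by push_cast; field_simp
    have hA : (2:ℕ)^(n-1-j) * 2^j = 2^(n-1) := by rw [← pow_add]; congr 1; omega
    have hnj : (2:ℕ)^(n-j) = 2^(n-1-j) + 2^(n-1-j) := by
      rw [show n - j = (n-1-j) + 1 by omega, pow_succ]; omega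
    have h2n : (2:ℕ)^n = 2^(n-j) * 2^j := by rw [← pow_add]; congr 1; omega
    have hsplit : Sv (2^n) = ∑ s ∈ Finset.range (2^(n-1-j)),
        (v^(s*2^j)) (Sv (2^j) + g (Sv (2^j))) := by
      calc Sv (2^n) = ∑ i ∈ Finset.range (2^(n-j) * 2^j), (v^i) ζ := by rw [← h2n]
      _ = ∑ s ∈ Finset.range (2^(n-j)), ∑ r ∈ Finset.range (2^j), (v^(s*2^j+r)) ζ :=
            sum_range_mul' _ _ _
      _ = ∑ s ∈ Finset.range (2^(n-j)), (v^(s*2^j)) (Sv (2^j)) := by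
            refine Finset.sum_congr rfl fun s _ => ?_
            rw [show Sv (2^j) = ∑ r ∈ Finset.range (2^j), (v^r) ζ from rfl, map_sum]
            refine Finset.sum_congr rfl fun r _ => ?_
            show (v^(s*2^j+r)) ζ = (v^(s*2^j)) ((v^r) ζ)
            rw [pow_add]; rfl
      _ = ∑ s ∈ Finset.range (2^(n-1-j)),
            ((v^(s*2^j)) (Sv (2^j)) + (v^((2^(n-1-j)+s)*2^j)) (Sv (2^j))) := by
            rw [hnj, sum_range_add' (fun s => (v^(s*2^j)) (Sv (2^j))) _ _,
              ← Finset.sum_add_distrib]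
      _ = ∑ s ∈ Finset.range (2^(n-1-j)), (v^(s*2^j)) (Sv (2^j) + g (Sv (2^j))) := by
            refine Finset.sum_congr rfl fun s _ => ?_
            rw [map_add]
            congr 1
            have e : (2^(n-1-j)+s)*2^j = s*2^j + 2^(n-1) := by
              rw [add_mul, hA]; omega
            rw [e, pow_add, hg_def]
            rfl
    have hτ_ne : τ ≠ 0 := by
      intro h0
      have hS0 : Sv (2^j) = 0 := by
        have e1 : ((2:ℝ)^j) • τ = Sv (2^j) := by
          rw [hτ_def, smul_smul]
          rw [show ((2:ℝ)^j * ((2:ℝ)^j)⁻¹) = 1 by field_simp, one_smul]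
        rw [← e1, h0, smul_zero]
      have hS2n : Sv (2^n) = 0 := by
        rw [hsplit, hS0, map_zero]
        simp
      rw [hζn_def, hS2n, smul_zero, norm_zero] at hζnorm_pos
      exact lt_irrefl 0 hζnorm_pos
    have hmidnorm : ‖ζn‖ ≤ ‖(2⁻¹:ℝ) • (τ + g τ)‖ := by
      have hX : Sv (2^j) + g (Sv (2^j)) = ((2:ℝ)^(j+1)) • ((2⁻¹:ℝ) • (τ + g τ)) := by
        rw [hτ_def, map_smul, ← smul_add, smul_smul, smul_smul]
        rw [show ((2:ℝ)^(j+1) * 2⁻¹ * ((2:ℝ)^j)⁻¹) = 1 by rw [pow_succ]; field_simp]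
        rw [one_smul]
      have hAcast : ((2:ℝ)^(n-1-j)) * (2:ℝ)^(j+1) = (2:ℝ)^n := by
        rw [← pow_add]
        congr 1
        omega
      rw [hζn_def, hns _ (by positivity), hsplit]
      calc ((2:ℝ)^n)⁻¹ * ‖∑ s ∈ Finset.range (2^(n-1-j)),
              (v^(s*2^j)) (Sv (2^j) + g (Sv (2^j)))‖
          ≤ ((2:ℝ)^n)⁻¹ * (((2:ℝ)^(n-1-j)) * ‖Sv (2^j) + g (Sv (2^j))‖) := by
            refine mul_le_mul_of_nonneg_left ?_ (by positivity)
            calc ‖∑ s ∈ Finset.range (2^(n-1-j)), (v^(s*2^j)) (Sv (2^j) + g (Sv (2^j)))‖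
                ≤ ∑ s ∈ Finset.range (2^(n-1-j)), ‖(v^(s*2^j)) (Sv (2^j) + g (Sv (2^j)))‖ :=
                  norm_sum_le _ _
            _ = ∑ s ∈ Finset.range (2^(n-1-j)), ‖Sv (2^j) + g (Sv (2^j))‖ :=
                  Finset.sum_congr rfl fun s _ =>
                    (v^(s*2^j)).norm_map (Sv (2^j) + g (Sv (2^j)))
            _ = ((2:ℝ)^(n-1-j)) * ‖Sv (2^j) + g (Sv (2^j))‖ := by
                  rw [Finset.sum_const, Finset.card_range, nsmul_eq_mul]
                  push_cast
                  ring
      _ = ‖(2⁻¹:ℝ) • (τ + g τ)‖ := by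
            rw [hX, hns _ (by positivity), ← hAcast]
            field_simp
    have hmid : (1 - δ₀ (1/16)) * ‖τ‖ < ‖(2⁻¹:ℝ) • (τ + g τ)‖ := by
      have h1 : (1 - δ₀ (1/16)) * ‖τ‖ ≤ (1 - min (δ₀ (1/16)) 2⁻¹) * ‖ζ‖ :=
        mul_le_mul hδmin hτn (norm_nonneg τ) hminpos
      exact lt_of_le_of_lt h1 (lt_of_lt_of_le hcase (hη_le.trans hmidnorm))
    have huc := uc2 g τ hτ_ne hmid
    have hscale : Sv (2^j) - g (Sv (2^j)) = ((2:ℝ)^j) • (τ - g τ) := by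
      rw [hτ_def, map_smul, ← smul_sub, smul_smul]
      rw [show ((2:ℝ)^j * ((2:ℝ)^j)⁻¹) = 1 by field_simp, one_smul]
    rw [hscale, hns _ (by positivity)]
    calc (2:ℝ)^j * ‖τ - g τ‖ ≤ (2:ℝ)^j * ((1/16) * ‖τ‖) :=
          mul_le_mul_of_nonneg_left huc (by positivity)
    _ ≤ (2:ℝ)^j * ((1/16) * ‖ζ‖) := by
          refine mul_le_mul_of_nonneg_left ?_ (by positivity)
          exact mul_le_mul_of_nonneg_left hτn (by norm_num)
    _ = (1/16) * (2^j:ℝ) * ‖ζ‖ := by push_cast; ring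
  have hSv_apply : ∀ m : ℕ, Sv m = ∑ i ∈ Finset.range m, (v^i) ζ := fun _ => rfl
  have hvshift : ∀ (a b : ℕ), ∑ i ∈ Finset.range b, (v^(a+i)) ζ = (v^a) (Sv b) := by
    intro a b
    rw [hSv_apply, map_sum]
    exact Finset.sum_congr rfl fun i _ => by rw [pow_add]; rfl
  -- u almost fixes ζn
  have hufix : ‖ζn - u ζn‖ ≤ (1/16) * ‖ζ‖ := by
    have hζn_ne : ζn ≠ 0 := by
      intro h0; rw [h0, norm_zero] at hζnorm_pos; exact lt_irrefl 0 hζnorm_pos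
    have hmid : (1 - δ₀ (1/16)) * ‖ζn‖ < ‖(2⁻¹:ℝ) • (ζn + u ζn)‖ := by
      have h1 : (1 - δ₀ (1/16)) * ‖ζn‖ ≤ (1 - min (δ₀ (1/16)) 2⁻¹) * ‖ζ‖ :=
        mul_le_mul hδmin hζn_le (norm_nonneg _) hminpos
      exact lt_of_le_of_lt h1 hcase
    calc ‖ζn - u ζn‖ ≤ (1/16) * ‖ζn‖ := uc2 u ζn hζn_ne hmid
    _ ≤ (1/16) * ‖ζ‖ := mul_le_mul_of_nonneg_left hζn_le (by norm_num)
  -- window estimate, by strong induction on m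
  have hwin : ∀ m, m < 2^n → ‖Sv m - g (Sv m)‖ ≤ (1/16) * (m:ℝ) * ‖ζ‖ := by
    intro m
    induction m using Nat.strong_induction_on with
    | _ m ih =>
      intro hm
      rcases Nat.eq_zero_or_pos m with h0 | hpos
      · subst h0
        rw [hSv_apply]
        simp
      · have hj1 : 2 ^ Nat.log 2 m ≤ m := Nat.pow_log_le_self 2 hpos.ne'
        have hj2 : m < 2 ^ (Nat.log 2 m + 1) := Nat.lt_pow_succ_log_self (by norm_num) m
        set j := Nat.log 2 m with hj_def
        have hjn : j < n := by
          have h := lt_of_le_of_lt hj1 hm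
          exact (Nat.pow_lt_pow_iff_right (by norm_num)).mp h
        have h2j : (2:ℕ)^(j+1) = 2^j + 2^j := by rw [pow_succ]; omega
        set m' := m - 2^j with hm'_def
        have hm'm : m' < m := by
          have : 0 < (2:ℕ)^j := by positivity
          omega
        have hmeq : m = 2^j + m' := by
          have : 0 < (2:ℕ)^j := by positivity
          omega
        have hsplitm : Sv m = Sv (2^j) + (v^(2^j)) (Sv m') := by
          rw [hSv_apply m, hmeq, sum_range_add' (fun i => (v^i) ζ) (2^j) m',
            hvshift (2^j) m', ← hSv_apply]
        have hcommg : g ((v^(2^j)) (Sv m')) = (v^(2^j)) (g (Sv m')) := by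
          show (g * v^(2^j)) (Sv m') = (v^(2^j) * g) (Sv m')
          rw [hg_def, ← pow_add, ← pow_add, Nat.add_comm]
        calc ‖Sv m - g (Sv m)‖
            = ‖(Sv (2^j) - g (Sv (2^j)))
                + ((v^(2^j)) (Sv m') - (v^(2^j)) (g (Sv m')))‖ := by
              rw [hsplitm, map_add, hcommg]
              congr 1
              abel
        _ ≤ ‖Sv (2^j) - g (Sv (2^j))‖ + ‖(v^(2^j)) (Sv m') - (v^(2^j)) (g (Sv m'))‖ :=
              norm_add_le _ _
        _ = ‖Sv (2^j) - g (Sv (2^j))‖ + ‖Sv m' - g (Sv m')‖ := by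
              rw [← map_sub, LinearIsometryEquiv.norm_map]
        _ ≤ (1/16) * ((2:ℝ)^j) * ‖ζ‖ + (1/16) * (m':ℝ) * ‖ζ‖ := by
              refine add_le_add (hgfix j hjn) (ih m' hm'm (by omega))
        _ = (1/16) * (m:ℝ) * ‖ζ‖ := by
              have hc : ((2:ℝ))^j + (m':ℝ) = (m:ℝ) := by
                rw [hmeq]; push_cast; ring
              rw [← hc]; ring
  -- shift identity:  v^m ζn - ζn  is controlled by the window estimate
  have hshift : ∀ m : ℕ, (v^m) (Sv (2^n)) - Sv (2^n) = (v^(2^n)) (Sv m) - Sv m := by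
    intro m
    have hA := sum_range_add' (fun i => (v^i) ζ) m (2^n)
    have hB := sum_range_add' (fun i => (v^i) ζ) (2^n) m
    rw [hvshift m (2^n), ← hSv_apply] at hA
    rw [hvshift (2^n) m, ← hSv_apply] at hB
    have hE : Sv m + (v^m) (Sv (2^n)) = Sv (2^n) + (v^(2^n)) (Sv m) := by
      rw [← hA, ← hB, Nat.add_comm]
    calc (v^m) (Sv (2^n)) - Sv (2^n)
        = (Sv m + (v^m) (Sv (2^n))) - Sv m - Sv (2^n) := by abel
    _ = (Sv (2^n) + (v^(2^n)) (Sv m)) - Sv m - Sv (2^n) := by rw [hE]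
    _ = (v^(2^n)) (Sv m) - Sv m := by abel
  -- powers of v almost fix ζn (uniform window estimate)
  have hvfix : ∀ m : ℕ, m < 2^n →
      ‖ζn - (v^m) ζn‖ ≤ ((2:ℝ)^n)⁻¹ * (2 * ((1/16) * (m:ℝ) * ‖ζ‖)) := by
    intro m hm
    have hζn_sub : ζn - (v^m) ζn = ((2^n:ℝ))⁻¹ • (Sv (2^n) - (v^m) (Sv (2^n))) := by
      rw [hζn_def, map_smul, ← smul_sub]
    rw [hζn_sub, hns _ (by positivity)]
    refine mul_le_mul_of_nonneg_left ?_ (by positivity)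
    rw [norm_sub_rev, hshift m]
    have hgg : (v^(2^n)) (Sv m) = g (g (Sv m)) := by
      show (v^(2^n)) (Sv m) = (g * g) (Sv m)
      rw [hg_def, ← pow_add,
        show (2:ℕ)^(n-1) + 2^(n-1) = 2^n from by
          rw [← two_mul, ← pow_succ']; congr 1; omega]
    calc ‖(v^(2^n)) (Sv m) - Sv m‖
        = ‖(g (g (Sv m)) - g (Sv m)) + (g (Sv m) - Sv m)‖ := by
          rw [hgg]; congr 1; abel
    _ ≤ ‖g (g (Sv m)) - g (Sv m)‖ + ‖g (Sv m) - Sv m‖ := norm_add_le _ _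
    _ = ‖g (Sv m) - Sv m‖ + ‖g (Sv m) - Sv m‖ := by
          rw [← map_sub, LinearIsometryEquiv.norm_map]
    _ = 2 * ‖Sv m - g (Sv m)‖ := by rw [norm_sub_rev]; ring
    _ ≤ 2 * ((1/16) * (m:ℝ) * ‖ζ‖) :=
          mul_le_mul_of_nonneg_left (hwin m hm) (by norm_num)
  -- commutator transfer: powers of w almost fix ζn
  have hwfix : ∀ m : ℕ, m < 2^n → ‖ζn - (w^m) ζn‖
      ≤ (1/8) * ‖ζ‖ + (1/4) * ((2:ℝ)^n)⁻¹ * (m:ℝ) * ‖ζ‖ := by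
    intro m hm
    have hkeym : (v^m * u) * w^m = u * v^m := (key m).symm
    have hid : ‖ζn - (w^m) ζn‖ = ‖(v^m) (u ζn) - u ((v^m) ζn)‖ := by
      have e1 : (v^m * u) (ζn - (w^m) ζn) = (v^m) (u ζn) - u ((v^m) ζn) := by
        rw [map_sub]
        congr 1
        show ((v^m * u) * w^m) ζn = _
        rw [hkeym]
        rfl
      rw [← e1, LinearIsometryEquiv.norm_map]
    rw [hid]
    have t1 : (v^m) (u ζn) - u ((v^m) ζn)
        = ((v^m) (u ζn) - (v^m) ζn) + ((v^m) ζn - ζn) + (ζn - u ζn)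
          + (u ζn - u ((v^m) ζn)) := by abel
    calc ‖(v^m) (u ζn) - u ((v^m) ζn)‖
        ≤ ‖(v^m) (u ζn) - (v^m) ζn‖ + ‖(v^m) ζn - ζn‖ + ‖ζn - u ζn‖
          + ‖u ζn - u ((v^m) ζn)‖ := by
          rw [t1]
          exact le_trans (norm_add_le _ _) (add_le_add
            (le_trans (norm_add_le _ _) (add_le_add (norm_add_le _ _) le_rfl)) le_rfl)
    _ = ‖ζn - u ζn‖ + ‖ζn - (v^m) ζn‖ + ‖ζn - u ζn‖ + ‖ζn - (v^m) ζn‖ := by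
          rw [← map_sub, LinearIsometryEquiv.norm_map, ← map_sub,
            LinearIsometryEquiv.norm_map]
          rw [norm_sub_rev (u ζn) ζn, norm_sub_rev ((v^m) ζn) ζn]
    _ ≤ ((1/16) * ‖ζ‖) + (((2:ℝ)^n)⁻¹ * (2 * ((1/16) * (m:ℝ) * ‖ζ‖)))
          + ((1/16) * ‖ζ‖) + (((2:ℝ)^n)⁻¹ * (2 * ((1/16) * (m:ℝ) * ‖ζ‖))) := by
          have h1 := hufix
          have h2 := hvfix m hm
          gcongr
    _ = (1/8) * ‖ζ‖ + (1/4) * ((2:ℝ)^n)⁻¹ * (m:ℝ) * ‖ζ‖ := by ring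
  -- the telescoping budget
  have hbud : ‖∑ m ∈ Finset.range (2^n), (w^m) ζn‖ ≤ ‖ξ‖ := by
    have hwv : ∀ m i : ℕ, (w^m) ((v^i) ζ) = (v^i) ((w^m) ζ) := by
      intro m i
      show ((w^m) * (v^i)) ζ = ((v^i) * (w^m)) ζ
      rw [(cwv.pow_pow m i).eq]
    have hstep : ∀ m : ℕ, (w^m) ζn
        = ((2^n:ℝ))⁻¹ • ∑ i ∈ Finset.range (2^n), (v^i) ((w^m) ζ) := by
      intro m
      rw [hζn_def, map_smul, hSv_apply, map_sum]
      congr 1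
      exact Finset.sum_congr rfl fun i _ => hwv m i
    have htel : ∑ m ∈ Finset.range (2^n), (w^m) ζ = (2⁻¹:ℝ) • (ξ - (w^(2^n)) ξ) := by
      have hterm : ∀ m : ℕ, (w^m) ζ = (2⁻¹:ℝ) • ((w^m) ξ - (w^(m+1)) ξ) := by
        intro m
        rw [hζapp, map_smul, map_sub]
        congr 2
      rw [Finset.sum_congr rfl (fun m _ => hterm m), ← Finset.smul_sum,
        Finset.sum_range_sub' (fun m => (w^m) ξ) (2^n)]
      simp
    calc ‖∑ m ∈ Finset.range (2^n), (w^m) ζn‖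
        = ‖((2^n:ℝ))⁻¹ • ∑ i ∈ Finset.range (2^n),
            (v^i) (∑ m ∈ Finset.range (2^n), (w^m) ζ)‖ := by
          rw [Finset.sum_congr rfl (fun m _ => hstep m), ← Finset.smul_sum]
          congr 1
          rw [Finset.sum_comm]
          exact congrArg (fun S => ((2^n:ℝ))⁻¹ • S)
            (Finset.sum_congr rfl fun i _ => (map_sum (v^i) _ _).symm)
    _ ≤ ((2:ℝ)^n)⁻¹ * (((2:ℝ)^n) * ‖(2⁻¹:ℝ) • (ξ - (w^(2^n)) ξ)‖) := by
          rw [hns _ (by positivity), htel]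
          refine mul_le_mul_of_nonneg_left ?_ (by positivity)
          calc ‖∑ i ∈ Finset.range (2^n), (v^i) ((2⁻¹:ℝ) • (ξ - (w^(2^n)) ξ))‖
              ≤ ∑ i ∈ Finset.range (2^n), ‖(v^i) ((2⁻¹:ℝ) • (ξ - (w^(2^n)) ξ))‖ :=
                norm_sum_le _ _
          _ = ∑ i ∈ Finset.range (2^n), ‖(2⁻¹:ℝ) • (ξ - (w^(2^n)) ξ)‖ :=
                Finset.sum_congr rfl fun i _ => (v^i).norm_map _
          _ = ((2:ℝ)^n) * ‖(2⁻¹:ℝ) • (ξ - (w^(2^n)) ξ)‖ := by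
                rw [Finset.sum_const, Finset.card_range, nsmul_eq_mul]
                push_cast
                ring
    _ ≤ ‖ξ‖ := by
          rw [hns _ (by norm_num)]
          have h1 : ‖ξ - (w^(2^n)) ξ‖ ≤ 2 * ‖ξ‖ := by
            calc ‖ξ - (w^(2^n)) ξ‖ ≤ ‖ξ‖ + ‖(w^(2^n)) ξ‖ := norm_sub_le _ _
            _ = 2 * ‖ξ‖ := by rw [LinearIsometryEquiv.norm_map]; ring
          rw [show ((2:ℝ)^n)⁻¹ * ((2:ℝ)^n * (2⁻¹ * ‖ξ - (w^(2^n)) ξ‖))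
              = 2⁻¹ * ‖ξ - (w^(2^n)) ξ‖ from by field_simp]
          linarith
  -- assembling everything
  have hsum_m : ∑ m ∈ Finset.range (2^n), (m:ℝ) ≤ ((2:ℝ)^n) * ((2:ℝ)^n) := by
    calc ∑ m ∈ Finset.range (2^n), (m:ℝ)
        ≤ ∑ _m ∈ Finset.range (2^n), ((2:ℝ)^n) := by
          refine Finset.sum_le_sum fun m hm => ?_
          have h := Finset.mem_range.mp hm
          have : (m:ℝ) < ((2^n : ℕ):ℝ) := by exact_mod_cast h
          push_cast at this
          linarith
    _ = ((2:ℝ)^n) * ((2:ℝ)^n) := by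
          rw [Finset.sum_const, Finset.card_range, nsmul_eq_mul]
          push_cast
          ring
  have hsum_diff : ‖∑ m ∈ Finset.range (2^n), (ζn - (w^m) ζn)‖
      ≤ (3/4) * ((2:ℝ)^n) * ‖ζn‖ := by
    calc ‖∑ m ∈ Finset.range (2^n), (ζn - (w^m) ζn)‖
        ≤ ∑ m ∈ Finset.range (2^n), ‖ζn - (w^m) ζn‖ := norm_sum_le _ _
    _ ≤ ∑ m ∈ Finset.range (2^n),
          ((1/8) * ‖ζ‖ + (1/4) * ((2:ℝ)^n)⁻¹ * (m:ℝ) * ‖ζ‖) :=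
          Finset.sum_le_sum fun m hm => hwfix m (Finset.mem_range.mp hm)
    _ = ((2:ℝ)^n) * ((1/8) * ‖ζ‖)
          + ((1/4) * ((2:ℝ)^n)⁻¹ * ‖ζ‖) * ∑ m ∈ Finset.range (2^n), (m:ℝ) := by
          rw [Finset.sum_add_distrib, Finset.sum_const, Finset.card_range, nsmul_eq_mul,
            Finset.mul_sum]
          congr 1
          · push_cast; ring
          · exact Finset.sum_congr rfl fun m _ => by ring
    _ ≤ ((2:ℝ)^n) * ((1/8) * ‖ζ‖) + ((1/4) * ((2:ℝ)^n)⁻¹ * ‖ζ‖) * (((2:ℝ)^n) * ((2:ℝ)^n)) := by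
          gcongr
    _ = (3/8) * ((2:ℝ)^n) * ‖ζ‖ := by
          field_simp
          ring
    _ ≤ (3/8) * ((2:ℝ)^n) * (2 * ‖ζn‖) := by gcongr
    _ = (3/4) * ((2:ℝ)^n) * ‖ζn‖ := by ring
  have hdecomp : ((2:ℝ)^n) • ζn = (∑ m ∈ Finset.range (2^n), (w^m) ζn)
      + ∑ m ∈ Finset.range (2^n), (ζn - (w^m) ζn) := by
    rw [← Finset.sum_add_distrib]
    have hterm : ∀ m : ℕ, (w^m) ζn + (ζn - (w^m) ζn) = ζn := fun m => by abel
    rw [Finset.sum_congr rfl fun m _ => hterm m, Finset.sum_const, Finset.card_range,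
      ← Nat.cast_smul_eq_nsmul ℝ]
    congr 1
    push_cast
    ring
  have hmain : ((2:ℝ)^n) * ‖ζn‖ ≤ ‖ξ‖ + (3/4) * ((2:ℝ)^n) * ‖ζn‖ := by
    calc ((2:ℝ)^n) * ‖ζn‖ = ‖((2:ℝ)^n) • ζn‖ := (hns _ (by positivity) _).symm
    _ = ‖(∑ m ∈ Finset.range (2^n), (w^m) ζn)
          + ∑ m ∈ Finset.range (2^n), (ζn - (w^m) ζn)‖ := by rw [hdecomp]
    _ ≤ ‖∑ m ∈ Finset.range (2^n), (w^m) ζn‖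
          + ‖∑ m ∈ Finset.range (2^n), (ζn - (w^m) ζn)‖ := norm_add_le _ _
    _ ≤ ‖ξ‖ + (3/4) * ((2:ℝ)^n) * ‖ζn‖ := add_le_add hbud hsum_diff
  -- conclusion
  rw [hLHS]
  refine le_trans ?_ (le_max_right _ _)
  have hpow2 : (2:ℝ)^(n-2) * (2:ℝ)^2 = (2:ℝ)^n := by
    rw [← pow_add]
    congr 1
    omega
  have hp : (2⁻¹:ℝ)^(n-2) = 4 * ((2:ℝ)^n)⁻¹ := by
    rw [inv_pow]
    rw [← hpow2]
    rw [mul_inv]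
    norm_num
    ring
  calc ‖(2⁻¹:ℝ) • (ζn + u ζn)‖ ≤ ‖ζn‖ := hη_le
  _ ≤ (2⁻¹:ℝ)^(n-2) * ‖ξ‖ := by
      rw [hp]
      have h1 : (1/4) * ((2:ℝ)^n) * ‖ζn‖ ≤ ‖ξ‖ := by linarith
      calc ‖ζn‖ = 4 * ((2:ℝ)^n)⁻¹ * ((1/4) * ((2:ℝ)^n) * ‖ζn‖) := by
            field_simp
      _ ≤ 4 * ((2:ℝ)^n)⁻¹ * ‖ξ‖ := mul_le_mul_of_nonneg_left h1 (by positivity)
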